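/- Let n ≥ 2 and define the Legendrian lift of the inside-out wrinkle F : ℝ × ℝ^{n−1} → ℝⁿ × ℝⁿ × ℝ by x₁ = u³ + 3u(‖v‖² − 1), (x₂,…,xₙ) = v, y₁ = (u² + ‖v‖² − 1)/3, (y₂,…,yₙ) = 2u(‖v‖² − 1 − (1/3)u²)·v, z = u⁵/5 + (2/3)u³(‖v‖² − 1) + u(‖v‖² − 1)². Then F is injective, satisfies the Legendrian condition Dz(p) = Σᵢ yᵢ(p)·Dxᵢ(p) at every point, and the set of points where DF fails to be injective is exactly the sphere {(u, v) : u = 0, ‖v‖ = 1}. -/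

import Mathlib

open ContinuousLinearMap

noncomputable section Stmt10Aux

variable {m : ℕ}

abbrev SV (m : ℕ) := EuclideanSpace ℝ (Fin m)

def s10ip (v : SV m) : (ℝ × SV m) →L[ℝ] ℝ :=
  (innerSL ℝ v).comp (ContinuousLinearMap.snd ℝ ℝ (SV m))

def s10fst : (ℝ × SV m) →L[ℝ] ℝ := ContinuousLinearMap.fst ℝ ℝ (SV m)
def s10snd : (ℝ × SV m) →L[ℝ] SV m := ContinuousLinearMap.snd ℝ ℝ (SV m)

def s10DX (u : ℝ) (v : SV m) : (ℝ × SV m) →L[ℝ] ℝ :=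
  (3 * u ^ 2 + 3 * (‖v‖ ^ 2 - 1)) • s10fst + (6 * u) • s10ip v

def s10DY (u : ℝ) (v : SV m) : (ℝ × SV m) →L[ℝ] ℝ :=
  (2 * u / 3) • s10fst + (2 / 3 : ℝ) • s10ip v

def s10DZ (u : ℝ) (v : SV m) : (ℝ × SV m) →L[ℝ] ℝ :=
  ((u ^ 2 + (‖v‖ ^ 2 - 1)) ^ 2) • s10fst
    + (4 / 3 * u ^ 3 + 4 * u * (‖v‖ ^ 2 - 1)) • s10ip v

def s10DR (u : ℝ) (v : SV m) : (ℝ × SV m) →L[ℝ] SV m :=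
  ((2 * (‖v‖ ^ 2 - 1) - 2 * u ^ 2) • s10fst + (4 * u) • s10ip v).smulRight v
    + (2 * u * (‖v‖ ^ 2 - 1 - (1 / 3) * u ^ 2)) • s10snd

@[simp] lemma s10ip_apply (v : SV m) (w : ℝ × SV m) : s10ip v w = inner ℝ v w.2 := rfl
@[simp] lemma s10fst_apply (w : ℝ × SV m) : (s10fst : (ℝ × SV m) →L[ℝ] ℝ) w = w.1 := rfl
@[simp] lemma s10snd_apply (w : ℝ × SV m) : (s10snd : (ℝ × SV m) →L[ℝ] SV m) w = w.2 := rfl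

@[simp] lemma s10DX_apply (u : ℝ) (v : SV m) (w : ℝ × SV m) :
    s10DX u v w = (3 * u ^ 2 + 3 * (‖v‖ ^ 2 - 1)) * w.1 + 6 * u * inner ℝ v w.2 := by
  simp [s10DX]; try ring

@[simp] lemma s10DY_apply (u : ℝ) (v : SV m) (w : ℝ × SV m) :
    s10DY u v w = 2 * u / 3 * w.1 + 2 / 3 * inner ℝ v w.2 := by
  simp [s10DY]

@[simp] lemma s10DZ_apply (u : ℝ) (v : SV m) (w : ℝ × SV m) :
    s10DZ u v w = (u ^ 2 + (‖v‖ ^ 2 - 1)) ^ 2 * w.1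
      + (4 / 3 * u ^ 3 + 4 * u * (‖v‖ ^ 2 - 1)) * inner ℝ v w.2 := by
  simp [s10DZ]; try ring

@[simp] lemma s10DR_apply (u : ℝ) (v : SV m) (w : ℝ × SV m) :
    s10DR u v w = ((2 * (‖v‖ ^ 2 - 1) - 2 * u ^ 2) * w.1 + 4 * u * inner ℝ v w.2) • v
      + (2 * u * (‖v‖ ^ 2 - 1 - (1 / 3) * u ^ 2)) • w.2 := by
  simp [s10DR]; try ring_nf

lemma s10hq (p : ℝ × SV m) :
    HasFDerivAt (fun q : ℝ × SV m => ‖q.2‖ ^ 2)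
      (2 • (innerSL ℝ p.2).comp (ContinuousLinearMap.snd ℝ ℝ (SV m))) p :=
  (hasFDerivAt_snd (𝕜 := ℝ) (p := p)).norm_sq

lemma s10hpow (n : ℕ) (p : ℝ × SV m) :
    HasFDerivAt (fun q : ℝ × SV m => q.1 ^ n)
      (((n : ℝ) * p.1 ^ (n - 1)) • (s10fst : (ℝ × SV m) →L[ℝ] ℝ)) p := by
  simpa [s10fst, Function.comp_def] using
    (hasDerivAt_pow n p.1).comp_hasFDerivAt p (hasFDerivAt_fst (𝕜 := ℝ) (p := p))

lemma s10hx1 (p : ℝ × SV m) :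
    HasFDerivAt (fun p : ℝ × SV m => p.1 ^ 3 + 3 * p.1 * (‖p.2‖ ^ 2 - 1))
      (s10DX p.1 p.2) p := by
  have h := (s10hpow 3 p).add
    (((hasFDerivAt_fst (𝕜 := ℝ) (p := p)).const_mul 3).mul ((s10hq p).sub_const 1))
  refine h.congr_fderiv (ContinuousLinearMap.ext fun w => ?_)
  simp [two_smul]
  ring

lemma s10hy1 (p : ℝ × SV m) :
    HasFDerivAt (fun p : ℝ × SV m => (p.1 ^ 2 + ‖p.2‖ ^ 2 - 1) / 3)
      (s10DY p.1 p.2) p := by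
  have hfun : (fun p : ℝ × SV m => (p.1 ^ 2 + ‖p.2‖ ^ 2 - 1) / 3)
      = fun p : ℝ × SV m => (p.1 ^ 2 + ‖p.2‖ ^ 2 - 1) * (1 / 3) := by
    funext q; ring
  rw [hfun]
  have h := (((s10hpow 2 p).add (s10hq p)).sub_const 1).mul_const (1 / 3)
  refine h.congr_fderiv (ContinuousLinearMap.ext fun w => ?_)
  simp [two_smul]
  ring

lemma s10hz (p : ℝ × SV m) :
    HasFDerivAt (fun p : ℝ × SV m =>
        p.1 ^ 5 / 5 + 2 / 3 * p.1 ^ 3 * (‖p.2‖ ^ 2 - 1) + p.1 * (‖p.2‖ ^ 2 - 1) ^ 2)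
      (s10DZ p.1 p.2) p := by
  have hfun : (fun p : ℝ × SV m =>
        p.1 ^ 5 / 5 + 2 / 3 * p.1 ^ 3 * (‖p.2‖ ^ 2 - 1) + p.1 * (‖p.2‖ ^ 2 - 1) ^ 2)
      = fun p : ℝ × SV m =>
        p.1 ^ 5 * (1 / 5) + 2 / 3 * p.1 ^ 3 * (‖p.2‖ ^ 2 - 1)
          + p.1 * ((‖p.2‖ ^ 2 - 1) * (‖p.2‖ ^ 2 - 1)) := by
    funext q; ring
  rw [hfun]
  have h := (((s10hpow 5 p).mul_const (1 / 5)).add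
      (((s10hpow 3 p).const_mul (2 / 3)).mul ((s10hq p).sub_const 1))).add
    ((hasFDerivAt_fst (𝕜 := ℝ) (p := p)).mul
      (((s10hq p).sub_const 1).mul ((s10hq p).sub_const 1)))
  refine h.congr_fderiv (ContinuousLinearMap.ext fun w => ?_)
  simp [two_smul]
  ring

lemma s10hyr (p : ℝ × SV m) :
    HasFDerivAt (fun p : ℝ × SV m =>
        (2 * p.1 * (‖p.2‖ ^ 2 - 1 - (1 / 3) * p.1 ^ 2)) • p.2)
      (s10DR p.1 p.2) p := by
  have hc := ((hasFDerivAt_fst (𝕜 := ℝ) (p := p)).const_mul 2).mul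
    (((s10hq p).sub_const 1).sub ((s10hpow 2 p).const_mul (1 / 3)))
  have h := hc.smul (hasFDerivAt_snd (𝕜 := ℝ) (p := p))
  refine h.congr_fderiv (ContinuousLinearMap.ext fun w => ?_)
  simp only [s10DR_apply, ContinuousLinearMap.add_apply, ContinuousLinearMap.smul_apply,
    ContinuousLinearMap.coe_smul', Pi.smul_apply, ContinuousLinearMap.smulRight_apply,
    ContinuousLinearMap.coe_comp', Function.comp_apply, ContinuousLinearMap.coe_fst',
    ContinuousLinearMap.coe_snd', innerSL_apply_apply, ContinuousLinearMap.coe_sub', Pi.sub_apply,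
    two_smul, smul_eq_mul, s10fst_apply, s10snd_apply, s10ip_apply, Pi.mul_apply]
  match_scalars <;> ring

def s10DF (u : ℝ) (v : SV m) :
    (ℝ × SV m) →L[ℝ] (ℝ × SV m) × (ℝ × SV m) × ℝ :=
  ((s10DX u v).prod s10snd).prod (((s10DY u v).prod (s10DR u v)).prod (s10DZ u v))

lemma s10hF (p : ℝ × SV m) :
    HasFDerivAt (fun p : ℝ × SV m =>
        ((p.1 ^ 3 + 3 * p.1 * (‖p.2‖ ^ 2 - 1), p.2),
          ((p.1 ^ 2 + ‖p.2‖ ^ 2 - 1) / 3,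
            (2 * p.1 * (‖p.2‖ ^ 2 - 1 - (1 / 3) * p.1 ^ 2)) • p.2),
          p.1 ^ 5 / 5 + 2 / 3 * p.1 ^ 3 * (‖p.2‖ ^ 2 - 1) + p.1 * (‖p.2‖ ^ 2 - 1) ^ 2))
      (s10DF p.1 p.2) p :=
  ((s10hx1 p).prodMk (hasFDerivAt_snd (𝕜 := ℝ) (p := p))).prodMk
    (((s10hy1 p).prodMk (s10hyr p)).prodMk (s10hz p))

end Stmt10Aux

/-- The Legendrian lift of the inside-out wrinkle,
`x₁ = u³ + 3u(‖v‖² − 1)`, `(x₂,…,xₙ) = v`, `y₁ = (u² + ‖v‖² − 1)/3`,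
`(y₂,…,yₙ) = 2u(‖v‖² − 1 − (1/3)u²)·v`, `z = u⁵/5 + (2/3)u³(‖v‖² − 1) + u(‖v‖² − 1)²`
(with `n ≥ 2`), is injective, satisfies the Legendrian condition
`Dz(p) = Σᵢ yᵢ(p)·Dxᵢ(p)` at every point, and the set of points where its derivative fails to
be injective is exactly the sphere `{(u, v) : u = 0, ‖v‖ = 1}`. -/
theorem stmt_10 (n : ℕ) (hn : 2 ≤ n) :
    let V := EuclideanSpace ℝ (Fin (n - 1))
    let x1 : ℝ × V → ℝ := fun p => p.1 ^ 3 + 3 * p.1 * (‖p.2‖ ^ 2 - 1)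
    let y1 : ℝ × V → ℝ := fun p => (p.1 ^ 2 + ‖p.2‖ ^ 2 - 1) / 3
    let yr : ℝ × V → V := fun p =>
      (2 * p.1 * (‖p.2‖ ^ 2 - 1 - (1 / 3) * p.1 ^ 2)) • p.2
    let z : ℝ × V → ℝ := fun p =>
      p.1 ^ 5 / 5 + 2 / 3 * p.1 ^ 3 * (‖p.2‖ ^ 2 - 1) + p.1 * (‖p.2‖ ^ 2 - 1) ^ 2
    let F : ℝ × V → (ℝ × V) × (ℝ × V) × ℝ := fun p => ((x1 p, p.2), (y1 p, yr p), z p)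
    Function.Injective F ∧
    (∀ p w : ℝ × V,
        fderiv ℝ z p w = y1 p * fderiv ℝ x1 p w + (inner ℝ (yr p) w.2 : ℝ)) ∧
    {p : ℝ × V | ¬ Function.Injective ⇑(fderiv ℝ F p)}
      = {p : ℝ × V | p.1 = 0 ∧ ‖p.2‖ = 1} := by
  show
    Function.Injective (fun p : ℝ × SV (n - 1) =>
        ((p.1 ^ 3 + 3 * p.1 * (‖p.2‖ ^ 2 - 1), p.2),
          ((p.1 ^ 2 + ‖p.2‖ ^ 2 - 1) / 3,
            (2 * p.1 * (‖p.2‖ ^ 2 - 1 - (1 / 3) * p.1 ^ 2)) • p.2),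
          p.1 ^ 5 / 5 + 2 / 3 * p.1 ^ 3 * (‖p.2‖ ^ 2 - 1) + p.1 * (‖p.2‖ ^ 2 - 1) ^ 2)) ∧
    (∀ p w : ℝ × SV (n - 1),
        fderiv ℝ (fun p : ℝ × SV (n - 1) =>
            p.1 ^ 5 / 5 + 2 / 3 * p.1 ^ 3 * (‖p.2‖ ^ 2 - 1) + p.1 * (‖p.2‖ ^ 2 - 1) ^ 2) p w
          = (p.1 ^ 2 + ‖p.2‖ ^ 2 - 1) / 3 *
              fderiv ℝ (fun p : ℝ × SV (n - 1) =>
                p.1 ^ 3 + 3 * p.1 * (‖p.2‖ ^ 2 - 1)) p w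
            + (inner ℝ ((2 * p.1 * (‖p.2‖ ^ 2 - 1 - (1 / 3) * p.1 ^ 2)) • p.2) w.2 : ℝ)) ∧
    {p : ℝ × SV (n - 1) | ¬ Function.Injective ⇑(fderiv ℝ (fun p : ℝ × SV (n - 1) =>
        ((p.1 ^ 3 + 3 * p.1 * (‖p.2‖ ^ 2 - 1), p.2),
          ((p.1 ^ 2 + ‖p.2‖ ^ 2 - 1) / 3,
            (2 * p.1 * (‖p.2‖ ^ 2 - 1 - (1 / 3) * p.1 ^ 2)) • p.2),
          p.1 ^ 5 / 5 + 2 / 3 * p.1 ^ 3 * (‖p.2‖ ^ 2 - 1) + p.1 * (‖p.2‖ ^ 2 - 1) ^ 2)) p)}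
      = {p : ℝ × SV (n - 1) | p.1 = 0 ∧ ‖p.2‖ = 1}
  refine ⟨?_, ?_, ?_⟩
  · -- injectivity
    intro p p' h
    simp only [Prod.mk.injEq] at h
    obtain ⟨⟨hx, hv⟩, ⟨hy, -⟩, hz⟩ := h
    rw [← hv] at hx hy hz
    refine Prod.ext ?_ hv
    set a := p.1 with ha_def
    set b := p'.1 with hb_def
    set d := ‖p.2‖ ^ 2 - 1 with hd_def
    show a = b
    by_contra hne
    have ha2 : a ^ 2 = b ^ 2 := by linarith
    have hsum : a + b = 0 := by
      rcases mul_eq_zero.mp (show (a - b) * (a + b) = (0:ℝ) by linear_combination ha2) with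
        h | h
      · exact absurd (by linarith) hne
      · exact h
    have hb : b = -a := by linarith
    have ha0 : a ≠ 0 := by
      intro h0
      apply hne
      rw [hb, h0]; ring
    rw [hb] at hx hz
    have h3 : a ^ 2 + 3 * d = 0 := by
      have h2 : (2 * a) * (a ^ 2 + 3 * d) = 0 := by linear_combination hx
      rcases mul_eq_zero.mp h2 with h | h
      · exact absurd (by linarith) ha0
      · exact h
    have h5 : (8 / 45) * a ^ 5 = 0 := by
      linear_combination hz - ((2 / 3) * a * d + (2 / 9) * a ^ 3) * h3
    have ha5 : a ^ 5 = 0 := by linarith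
    exact ha0 (pow_eq_zero_iff (by norm_num : (5:ℕ) ≠ 0) |>.mp ha5)
  · -- Legendrian condition
    intro p w
    rw [(s10hz (m := n - 1) p).fderiv, (s10hx1 (m := n - 1) p).fderiv]
    simp only [s10DZ_apply, s10DX_apply]
    rw [real_inner_smul_left]
    ring
  · -- singularity locus
    ext p
    simp only [Set.mem_setOf_eq]
    rw [(s10hF (m := n - 1) p).fderiv]
    constructor
    · intro hni
      by_contra hns
      apply hni
      refine (injective_iff_map_eq_zero _).mpr fun w hw => ?_
      simp only [s10DF, ContinuousLinearMap.prod_apply, Prod.ext_iff, Prod.fst_zero,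
        Prod.snd_zero, s10DX_apply, s10DY_apply, s10DR_apply, s10DZ_apply,
        s10snd_apply] at hw
      obtain ⟨⟨hA, h2⟩, ⟨hB, -⟩, -⟩ := hw
      rw [h2] at hA hB
      simp only [inner_zero_right, mul_zero, add_zero] at hA hB
      have hw1 : w.1 = 0 := by
        by_cases hu : p.1 = 0
        · have hd : ‖p.2‖ ^ 2 - 1 ≠ 0 := by
            intro h
            exact hns ⟨hu, by nlinarith [norm_nonneg p.2]⟩
          rw [hu] at hA
          have : (3 * (‖p.2‖ ^ 2 - 1)) * w.1 = 0 := by linarith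
          rcases mul_eq_zero.mp this with h | h
          · exact absurd (by linarith) hd
          · exact h
        · have : (2 * p.1 / 3) * w.1 = 0 := by linarith
          rcases mul_eq_zero.mp this with h | h
          · exact absurd (by linarith) hu
          · exact h
      exact Prod.ext (by simpa using hw1) (by simpa using h2)
    · rintro ⟨h1, h2⟩ hinj
      have hd : ‖p.2‖ ^ 2 - 1 = 0 := by rw [h2]; norm_num
      have hkey : ((1:ℝ), (0 : EuclideanSpace ℝ (Fin (n - 1)))) = 0 := by
        apply hinj
        rw [map_zero]
        simp only [s10DF, ContinuousLinearMap.prod_apply, Prod.ext_iff, Prod.fst_zero,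
          Prod.snd_zero, s10DX_apply, s10DY_apply, s10DR_apply, s10DZ_apply, s10snd_apply]
        simp [h1, hd]
        try norm_num
      exact one_ne_zero (congrArg Prod.fst hkey)
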